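/- Let t ≠ C be real and U(z) = i(z² − 2i(t−C))/(|z|² + |z² + 2i(t−C)|²). Then the vector ψ = (1/(|z|² + |z² + 2i(t−C)|²))·(z̄, −iz² + 2(t−C))ᵀ satisfies ∂ψ₂ + Uψ₁ = 0 and −∂̄ψ₁ + Ūψ₂ = 0 at every point z ∈ ℂ. -/

import Mathlib

open Complex

noncomputable def pd1 (f : ℝ → ℝ → ℂ) : ℝ → ℝ → ℂ := fun x y => deriv (fun x' => f x' y) x
noncomputable def pd2 (f : ℝ → ℝ → ℂ) : ℝ → ℝ → ℂ := fun x y => deriv (fun y' => f x y') y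
noncomputable def del (f : ℝ → ℝ → ℂ) : ℝ → ℝ → ℂ :=
  fun x y => (pd1 f x y - Complex.I * pd2 f x y) / 2
noncomputable def delbar (f : ℝ → ℝ → ℂ) : ℝ → ℝ → ℂ :=
  fun x y => (pd1 f x y + Complex.I * pd2 f x y) / 2

/-- z = x + iy -/
noncomputable def zc (x y : ℝ) : ℂ := (x : ℂ) + Complex.I * (y : ℂ)

/-- |z|² + |z² + 2i(t−C)|² -/
noncomputable def denomDS (C t x y : ℝ) : ℝ :=
  (‖zc x y‖)^2 + (‖(zc x y)^2 + 2*Complex.I*((t - C : ℝ) : ℂ)‖)^2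

/-- U = i(z² − 2i(t−C))/(|z|² + |z² + 2i(t−C)|²) -/
noncomputable def UDS (C t : ℝ) : ℝ → ℝ → ℂ := fun x y =>
  Complex.I * ((zc x y)^2 - 2*Complex.I*((t - C : ℝ) : ℂ)) / ((denomDS C t x y : ℝ) : ℂ)

/-- ψ₁ = z̄/(|z|² + |z² + 2i(t−C)|²) -/
noncomputable def psi1DS (C t : ℝ) : ℝ → ℝ → ℂ := fun x y =>
  (starRingEnd ℂ) (zc x y) / ((denomDS C t x y : ℝ) : ℂ)

/-- ψ₂ = (−iz² + 2(t−C))/(|z|² + |z² + 2i(t−C)|²) -/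
noncomputable def psi2DS (C t : ℝ) : ℝ → ℝ → ℂ := fun x y =>
  (-Complex.I * (zc x y)^2 + 2*((t - C : ℝ) : ℂ)) / ((denomDS C t x y : ℝ) : ℂ)

noncomputable def DQ (s : ℝ) (a b : ℂ) : ℂ := a^2+b^2+(a^2-b^2)^2+(2*a*b+2*(s:ℂ))^2

lemma denom_cast (C t x y : ℝ) : ((denomDS C t x y : ℝ) : ℂ) = DQ (t-C) (x:ℂ) (y:ℂ) := by
  have h : denomDS C t x y =
      x^2+y^2+(x^2-y^2)^2+(2*x*y+2*(t-C))^2 := by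
    have hz : (zc x y)^2 + 2*Complex.I*((t - C : ℝ) : ℂ)
        = ((x^2-y^2 : ℝ) : ℂ) + Complex.I * ((2*x*y+2*(t-C) : ℝ) : ℂ) := by
      simp only [zc, Complex.ext_iff, pow_two]
      simp [Complex.mul_re, Complex.mul_im]
      ring
    simp only [denomDS, Complex.sq_norm]
    rw [hz]
    simp only [zc, Complex.normSq_apply, Complex.add_re, Complex.add_im, Complex.mul_re,
      Complex.mul_im, Complex.I_re, Complex.I_im, Complex.ofReal_re, Complex.ofReal_im]
    ring
  rw [h]; simp only [DQ]; push_cast; ring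

lemma denom_pos (C t : ℝ) (ht : t ≠ C) (x y : ℝ) : 0 < denomDS C t x y := by
  have hs : ((t - C : ℝ) : ℂ) ≠ 0 := by
    exact_mod_cast sub_ne_zero.mpr ht
  rcases eq_or_ne (zc x y) 0 with h | h
  · have hw : ((zc x y)^2 + 2*Complex.I*((t-C:ℝ):ℂ)) ≠ 0 := by
      rw [h]; simpa [Complex.I_ne_zero] using hs
    have h2 := norm_pos_iff.mpr hw
    have h1 : (0:ℝ) ≤ (‖zc x y‖)^2 := sq_nonneg _
    unfold denomDS; nlinarith
  · have h1 := norm_pos_iff.mpr h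
    have h2 : (0:ℝ) ≤ (‖(zc x y)^2 + 2*Complex.I*((t-C:ℝ):ℂ)‖)^2 := sq_nonneg _
    unfold denomDS; nlinarith

lemma hasDerivAt_DQ1 (s : ℝ) (b w : ℂ) :
    HasDerivAt (fun a => DQ s a b)
      (2*w + 2*(w^2-b^2)*(2*w) + 2*(2*w*b+2*(s:ℂ))*(2*b)) w := by
  have h1 : HasDerivAt (fun a : ℂ => a^2) (2*w) w := by simpa using hasDerivAt_pow 2 w
  have h2 : HasDerivAt (fun a : ℂ => (a^2-b^2)^2) (2*(w^2-b^2)*(2*w)) w := by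
    have := (h1.sub_const (b^2)).fun_pow 2
    norm_num at this
    convert this using 1 <;> ring
  have hl : HasDerivAt (fun a : ℂ => 2*a*b) (2*b) w := by
    simpa using ((hasDerivAt_id w).const_mul (2:ℂ)).mul_const b
  have h3 : HasDerivAt (fun a : ℂ => (2*a*b+2*(s:ℂ))^2) (2*(2*w*b+2*(s:ℂ))*(2*b)) w := by
    have := (hl.add_const (2*(s:ℂ))).fun_pow 2
    norm_num at this
    convert this using 1 <;> ring
  exact ((h1.add_const (b^2)).add h2).add h3

lemma hasDerivAt_DQ2 (s : ℝ) (a w : ℂ) :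
    HasDerivAt (fun b => DQ s a b)
      (2*w + 2*(a^2-w^2)*(-(2*w)) + 2*(2*a*w+2*(s:ℂ))*(2*a)) w := by
  have h1 : HasDerivAt (fun b : ℂ => b^2) (2*w) w := by simpa using hasDerivAt_pow 2 w
  have h2 : HasDerivAt (fun b : ℂ => (a^2-b^2)^2) (2*(a^2-w^2)*(-(2*w))) w := by
    have := (h1.const_sub (a^2)).fun_pow 2
    norm_num at this
    simpa only [mul_neg] using this
  have hl : HasDerivAt (fun b : ℂ => 2*a*b) (2*a) w := by
    simpa [mul_assoc] using (hasDerivAt_id w).const_mul (2*a)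
  have h3 : HasDerivAt (fun b : ℂ => (2*a*b+2*(s:ℂ))^2) (2*(2*a*w+2*(s:ℂ))*(2*a)) w := by
    have := (hl.add_const (2*(s:ℂ))).fun_pow 2
    norm_num at this
    convert this using 1 <;> ring
  exact ((h1.const_add (a^2)).add h2).add h3

set_option maxHeartbeats 2000000 in
theorem dsii_dirac_zero_level (C t : ℝ) (ht : t ≠ C) (x y : ℝ) :
    del (psi2DS C t) x y + UDS C t x y * psi1DS C t x y = 0 ∧
    -(delbar (psi1DS C t) x y) + (starRingEnd ℂ) (UDS C t x y) * psi2DS C t x y = 0 := by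
  have hne : DQ (t-C) (x:ℂ) (y:ℂ) ≠ 0 := by
    rw [← denom_cast]
    exact_mod_cast (denom_pos C t ht x y).ne'
  set X : ℂ := (x:ℂ) with hX
  set Y : ℂ := (y:ℂ) with hY
  set S : ℂ := ((t-C:ℝ):ℂ) with hS
  set D1 : ℂ := 2*X + 2*(X^2-Y^2)*(2*X) + 2*(2*X*Y+2*S)*(2*Y) with hD1
  set D2 : ℂ := 2*Y + 2*(X^2-Y^2)*(-(2*Y)) + 2*(2*X*Y+2*S)*(2*X) with hD2
  set Dv : ℂ := DQ (t-C) X Y with hDv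
  -- pd1 psi2
  have hp21 : pd1 (psi2DS C t) x y
      = ((-I*(2*(X+I*Y)))*Dv - (-I*(X+I*Y)^2+2*S)*D1)/Dv^2 := by
    have hfun : (fun x' : ℝ => psi2DS C t x' y)
        = fun x' : ℝ => (-I*((x':ℂ)+I*Y)^2+2*S) / DQ (t-C) (x':ℂ) Y := by
      funext a
      simp only [psi2DS, zc, denom_cast, hY, hS]
    have hnum : HasDerivAt (fun w : ℂ => -I*(w+I*Y)^2+2*S) (-I*(2*(X+I*Y))) X := by
      have h0 : HasDerivAt (fun w : ℂ => (w+I*Y)^2) (2*(X+I*Y)) X := by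
        have := ((hasDerivAt_id X).add_const (I*Y)).fun_pow 2
        norm_num at this
        convert this using 1 <;> ring
      exact (h0.const_mul (-I)).add_const _
    have hdiv := (hnum.div (hasDerivAt_DQ1 (t-C) Y X) hne).comp_ofReal
    unfold pd1
    rw [hfun]
    exact hdiv.deriv
  -- pd2 psi2
  have hp22 : pd2 (psi2DS C t) x y
      = ((-I*(2*(X+I*Y)*I))*Dv - (-I*(X+I*Y)^2+2*S)*D2)/Dv^2 := by
    have hfun : (fun y' : ℝ => psi2DS C t x y')
        = fun y' : ℝ => (-I*(X+I*(y':ℂ))^2+2*S) / DQ (t-C) X (y':ℂ) := by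
      funext a
      simp only [psi2DS, zc, denom_cast, hX, hS]
    have hnum : HasDerivAt (fun w : ℂ => -I*(X+I*w)^2+2*S) (-I*(2*(X+I*Y)*I)) Y := by
      have h0 : HasDerivAt (fun w : ℂ => (X+I*w)^2) (2*(X+I*Y)*I) Y := by
        have := (((hasDerivAt_id Y).const_mul I).const_add X).fun_pow 2
        norm_num at this
        convert this using 1 <;> ring
      exact (h0.const_mul (-I)).add_const _
    have hdiv := (hnum.div (hasDerivAt_DQ2 (t-C) X Y) hne).comp_ofReal
    unfold pd2
    rw [hfun]
    exact hdiv.deriv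
  -- pd1 psi1
  have hp11 : pd1 (psi1DS C t) x y
      = (1*Dv - (X-I*Y)*D1)/Dv^2 := by
    have hfun : (fun x' : ℝ => psi1DS C t x' y)
        = fun x' : ℝ => ((x':ℂ)-I*Y) / DQ (t-C) (x':ℂ) Y := by
      funext a
      simp only [psi1DS, zc, denom_cast, hY, map_add, map_mul, Complex.conj_I,
        Complex.conj_ofReal]
      ring_nf
    have hnum : HasDerivAt (fun w : ℂ => w - I*Y) 1 X := (hasDerivAt_id X).sub_const _
    have hdiv := (hnum.div (hasDerivAt_DQ1 (t-C) Y X) hne).comp_ofReal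
    unfold pd1
    rw [hfun]
    exact hdiv.deriv
  -- pd2 psi1
  have hp12 : pd2 (psi1DS C t) x y
      = ((-I)*Dv - (X-I*Y)*D2)/Dv^2 := by
    have hfun : (fun y' : ℝ => psi1DS C t x y')
        = fun y' : ℝ => (X-I*(y':ℂ)) / DQ (t-C) X (y':ℂ) := by
      funext a
      simp only [psi1DS, zc, denom_cast, hX, map_add, map_mul, Complex.conj_I,
        Complex.conj_ofReal]
      ring_nf
    have hnum : HasDerivAt (fun w : ℂ => X - I*w) (-I) Y := by
      have := ((hasDerivAt_id Y).const_mul I).const_sub X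
      norm_num at this
      convert this using 1 <;> ring
    have hdiv := (hnum.div (hasDerivAt_DQ2 (t-C) X Y) hne).comp_ofReal
    unfold pd2
    rw [hfun]
    exact hdiv.deriv
  have hU : UDS C t x y = I * ((X+I*Y)^2 - 2*I*S) / Dv := by
    simp only [UDS, zc, denom_cast, hX, hY, hS, hDv]
  have hUc : (starRingEnd ℂ) (UDS C t x y) = -I * ((X-I*Y)^2 + 2*I*S) / Dv := by
    rw [hU, map_div₀]
    have hDc : (starRingEnd ℂ) Dv = Dv := by
      rw [hDv, ← denom_cast, Complex.conj_ofReal, denom_cast]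
    rw [hDc]
    congr 1
    simp only [map_mul, map_sub, map_add, map_pow, map_ofNat, Complex.conj_I,
      Complex.conj_ofReal, hX, hY, hS]
    ring
  have hpsi1 : psi1DS C t x y = (X - I*Y)/Dv := by
    simp only [psi1DS, zc, denom_cast, hX, hY, map_add, map_mul, Complex.conj_I,
      Complex.conj_ofReal, hDv]
    ring_nf
  have hpsi2 : psi2DS C t x y = (-I*(X+I*Y)^2+2*S)/Dv := by
    simp only [psi2DS, zc, denom_cast, hX, hY, hS, hDv]
  have hI2 : (I:ℂ)^2 = -1 := Complex.I_sq
  have hI3 : (I:ℂ)^3 = -I := by rw [pow_succ, hI2]; ring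
  have hI4 : (I:ℂ)^4 = 1 := by rw [pow_succ, hI3]; simp [Complex.I_mul_I]
  have hI5 : (I:ℂ)^5 = I := by rw [pow_succ, hI4]; ring
  have hI6 : (I:ℂ)^6 = -1 := by rw [pow_succ, hI5, Complex.I_mul_I]
  constructor
  · simp only [del, hp21, hp22, hU, hpsi1]
    rw [hDv] at hne ⊢
    simp only [DQ] at hne ⊢
    rw [← hS] at hne ⊢
    rw [hD1, hD2]
    field_simp [hne]
    ring_nf
    simp only [hI2, hI3, hI4, hI5, hI6]
    ring_nf
  · simp only [delbar, hp11, hp12, hUc, hpsi2]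
    rw [hDv] at hne ⊢
    simp only [DQ] at hne ⊢
    rw [← hS] at hne ⊢
    rw [hD1, hD2]
    field_simp [hne]
    ring_nf
    simp only [hI2, hI3, hI4, hI5, hI6]
    ring_nf
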